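/- There exist constants c, C ∈ (0, ∞) such that for every positive integer n and every real x ∈ [-n, ∞), K_n(x) := (x+2n)^{x+2n} / ((2x+2n)^{x+n} (2n)^n) satisfies K_n(x) ≤ C · exp(-c·n·min(|x|/n, x²/n²)). -/

import Mathlib

open Real

lemma log_ge_pade {y : ℝ} (hy : 1 ≤ y) : 2*(y-1)/(y+1) ≤ Real.log y := by
  have hmono : MonotoneOn (fun z : ℝ => Real.log z + 4/(z+1)) (Set.Ici 1) := by
    apply monotoneOn_of_deriv_nonneg (convex_Ici 1)
    · apply ContinuousOn.add
      · exact Real.continuousOn_log.mono (by intro z hz; simp at hz ⊢; linarith)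
      · apply ContinuousOn.div continuousOn_const (by fun_prop)
        intro z hz; simp at hz; intro h; linarith
    · intro z hz
      simp only [interior_Ici, Set.mem_Ioi] at hz
      have hz0 : (0:ℝ) < z := by linarith
      have hz1 : z + 1 ≠ 0 := by linarith
      exact ((Real.hasDerivAt_log hz0.ne').add
        (((hasDerivAt_id z).add_const 1).inv hz1 |>.const_mul 4)).differentiableAt.differentiableWithinAt
    · intro z hz
      simp only [interior_Ici, Set.mem_Ioi] at hz
      have hz0 : (0:ℝ) < z := by linarith
      have hz1 : z + 1 ≠ 0 := by linarith
      have hd : HasDerivAt (fun z : ℝ => Real.log z + 4/(z+1))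
          (z⁻¹ + 4 * (-1 / (z+1)^2)) z := by
        have := (Real.hasDerivAt_log hz0.ne').add
          ((((hasDerivAt_id z).add_const 1).inv hz1).const_mul 4)
        exact this
      rw [hd.deriv]
      have : z⁻¹ + 4 * (-1 / (z+1)^2) = ((z-1)^2) / (z * (z+1)^2) := by
        field_simp; ring
      rw [this]; positivity
  have h1 : (1:ℝ) ∈ Set.Ici (1:ℝ) := by simp
  have h2 : y ∈ Set.Ici (1:ℝ) := hy
  have := hmono h1 h2 hy
  simp only [Real.log_one] at this
  have hy1 : (0:ℝ) < y + 1 := by linarith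
  rw [div_le_iff₀ hy1]
  have : 2 - 4/(y+1) ≤ Real.log y := by linarith
  rw [← sub_nonneg] at this ⊢
  have e : Real.log y * (y+1) - 2*(y-1) = (Real.log y - (2 - 4/(y+1))) * (y+1) := by
    field_simp; ring
  rw [e]; positivity

lemma log_le_half {y : ℝ} (hy : 1 ≤ y) : Real.log y ≤ (y - y⁻¹)/2 := by
  have hmono : MonotoneOn (fun z : ℝ => (z - z⁻¹)/2 - Real.log z) (Set.Ici 1) := by
    apply monotoneOn_of_deriv_nonneg (convex_Ici 1)
    · apply ContinuousOn.sub
      · apply ContinuousOn.div_const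
        apply ContinuousOn.sub continuousOn_id
        apply ContinuousOn.inv₀ continuousOn_id
        intro z hz; simp at hz; intro h; rw [id_eq] at h; linarith
      · exact Real.continuousOn_log.mono (by intro z hz; simp at hz ⊢; linarith)
    · intro z hz
      simp only [interior_Ici, Set.mem_Ioi] at hz
      have hz0 : (0:ℝ) < z := by linarith
      exact ((((hasDerivAt_id z).sub ((hasDerivAt_id z).inv hz0.ne')).div_const 2).sub
        (Real.hasDerivAt_log hz0.ne')).differentiableAt.differentiableWithinAt
    · intro z hz
      simp only [interior_Ici, Set.mem_Ioi] at hz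
      have hz0 : (0:ℝ) < z := by linarith
      have hd : HasDerivAt (fun z : ℝ => (z - z⁻¹)/2 - Real.log z)
          ((1 - (-1/z^2))/2 - z⁻¹) z := by
        have := (((hasDerivAt_id z).sub ((hasDerivAt_id z).inv hz0.ne')).div_const 2).sub
          (Real.hasDerivAt_log hz0.ne')
        exact this
      rw [hd.deriv]
      have : (1 - (-1/z^2))/2 - z⁻¹ = (z-1)^2 / (2*z^2) := by
        field_simp; ring
      rw [this]; positivity
  have h1 : (1:ℝ) ∈ Set.Ici (1:ℝ) := by simp
  have := hmono h1 hy hy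
  simp only [Real.log_one] at this
  norm_num at this
  linarith

lemma log_le_pade {y : ℝ} (hy0 : 0 < y) (hy : y ≤ 1) : Real.log y ≤ 2*(y-1)/(y+1) := by
  have h := log_ge_pade (y := y⁻¹) ((one_le_inv₀ hy0).2 hy)
  rw [Real.log_inv] at h
  have hy1 : (0:ℝ) < y + 1 := by linarith
  have hyi : (0:ℝ) < y⁻¹ + 1 := by positivity
  rw [div_le_iff₀ hyi] at h
  rw [le_div_iff₀ hy1]
  have hyy : y⁻¹ * y = 1 := inv_mul_cancel₀ hy0.ne'
  nlinarith [mul_le_mul_of_nonneg_right h hy0.le]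

lemma log_ge_half {y : ℝ} (hy0 : 0 < y) (hy : y ≤ 1) : (y - y⁻¹)/2 ≤ Real.log y := by
  have h := log_le_half (y := y⁻¹) ((one_le_inv₀ hy0).2 hy)
  rw [Real.log_inv, inv_inv] at h
  linarith

-- main analytic inequality
lemma hmain {p : ℝ} (hp : 0 ≤ p) :
    (1/20) * min |p-1| ((p-1)^2) ≤ p * Real.log p - (p+1) * Real.log ((p+1)/2) := by
  rcases hp.eq_or_lt with h0 | h0
  · -- p = 0
    rw [← h0]
    have h2 : (1:ℝ) - 2⁻¹ ≤ Real.log 2 := Real.one_sub_inv_le_log_of_pos (by norm_num)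
    have e : ((0:ℝ)+1)/2 = 2⁻¹ := by norm_num
    rw [e, Real.log_inv]
    norm_num
    linarith
  · have hp1 : (0:ℝ) < p + 1 := by linarith
    have hz0 : (0:ℝ) < (p+1)/2 := by linarith
    have hy0 : (0:ℝ) < 2*p/(p+1) := by positivity
    set y := 2*p/(p+1) with hydef
    set z := (p+1)/2 with hzdef
    have hkey : Real.log p = Real.log y + Real.log z := by
      rw [← Real.log_mul hy0.ne' hz0.ne']
      congr 1
      rw [hydef, hzdef]
      field_simp
    have hRHS : p * Real.log p - (p+1) * Real.log z = p * Real.log y - Real.log z := by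
      rw [hkey, hzdef]; ring
    rw [hRHS]
    rcases le_or_gt p 1 with hc | hc
    · -- 0 < p ≤ 1
      have hy1 : y ≤ 1 := by rw [hydef, div_le_one hp1]; linarith
      have hz1 : z ≤ 1 := by rw [hzdef]; linarith
      have hA := log_ge_half hy0 hy1
      have hB := log_le_pade hz0 hz1
      have hAp : p * ((y - y⁻¹)/2) ≤ p * Real.log y := by
        apply mul_le_mul_of_nonneg_left hA h0.le
      have hAy : p * ((y - y⁻¹)/2) = (p-1)*(3*p+1)/(4*(p+1)) := by
        rw [hydef]; field_simp; ring
      have hBz : 2*(z-1)/(z+1) = 2*(p-1)/(p+3) := by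
        rw [hzdef]; rw [div_eq_div_iff (by linarith) (by linarith)]; ring
      have hfin : (1/20)*(p-1)^2 ≤ (p-1)*(3*p+1)/(4*(p+1)) - 2*(p-1)/(p+3) := by
        rw [← sub_nonneg]
        have e : (p-1)*(3*p+1)/(4*(p+1)) - 2*(p-1)/(p+3) - (1/20)*(p-1)^2 =
            ((p-1)^2 * (20*(3*p+5) - 4*(p+1)*(p+3))) / (80*(p+1)*(p+3)) := by
          field_simp; ring
        rw [e]
        apply div_nonneg _ (by positivity)
        apply mul_nonneg (sq_nonneg _)
        nlinarith
      have hmle : min |p-1| ((p-1)^2) ≤ (p-1)^2 := min_le_right _ _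
      linarith
    · rcases le_or_gt p 7 with hc2 | hc2
      · -- 1 < p ≤ 7
        have hy1 : 1 ≤ y := by rw [hydef, le_div_iff₀ hp1]; linarith
        have hz1 : 1 ≤ z := by rw [hzdef]; linarith
        have hA := log_ge_pade hy1
        have hB := log_le_half hz1
        have hAp : p * (2*(y-1)/(y+1)) ≤ p * Real.log y := by
          apply mul_le_mul_of_nonneg_left hA h0.le
        have h31 : (0:ℝ) < 3*p+1 := by linarith
        have hAy : p * (2*(y-1)/(y+1)) = 2*p*(p-1)/(3*p+1) := by
          rw [hydef]; field_simp; ring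
        have hBz : (z - z⁻¹)/2 = (p-1)*(p+3)/(4*(p+1)) := by
          rw [hzdef]; field_simp; ring
        have hfin : (1/20)*(p-1)^2 ≤ 2*p*(p-1)/(3*p+1) - (p-1)*(p+3)/(4*(p+1)) := by
          rw [← sub_nonneg]
          have e : 2*p*(p-1)/(3*p+1) - (p-1)*(p+3)/(4*(p+1)) - (1/20)*(p-1)^2 =
              ((p-1)^2 * (20*(5*p+3) - 4*(3*p+1)*(p+1))) / (80*(3*p+1)*(p+1)) := by
            field_simp; ring
          rw [e]
          apply div_nonneg _ (by positivity)
          apply mul_nonneg (sq_nonneg _)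
          nlinarith
        have hmle : min |p-1| ((p-1)^2) ≤ (p-1)^2 := min_le_right _ _
        linarith
      · -- p > 7
        have hy1 : (1:ℝ) ≤ y := by rw [hydef, le_div_iff₀ hp1]; linarith
        have hA : 1 - y⁻¹ ≤ Real.log y := Real.one_sub_inv_le_log_of_pos hy0
        have hAp : p * (1 - y⁻¹) ≤ p * Real.log y := by
          apply mul_le_mul_of_nonneg_left hA h0.le
        have hAy : p * (1 - y⁻¹) = (p-1)/2 := by
          rw [hydef]; field_simp; ring
        have hB : Real.log z ≤ z * (10/27) := by
          have h1 : Real.log (z / Real.exp 1) ≤ z / Real.exp 1 - 1 :=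
            Real.log_le_sub_one_of_pos (by positivity)
          rw [Real.log_div hz0.ne' (Real.exp_ne_zero 1), Real.log_exp] at h1
          have he : (27/10 : ℝ) ≤ Real.exp 1 := by
            have := Real.exp_one_gt_d9; linarith
          have h2 : z / Real.exp 1 ≤ z / (27/10) := by
            apply div_le_div_of_nonneg_left hz0.le (by norm_num) he
          have h3 : z / (27/10 : ℝ) = z * (10/27) := by ring
          linarith
        have habs : |p-1| = p-1 := abs_of_nonneg (by linarith)
        have hmle : min |p-1| ((p-1)^2) ≤ p-1 := by
          rw [habs] at *; exact min_le_left _ _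
        rw [hzdef] at hB
        linarith

theorem stmt3 : ∃ c C : ℝ, 0 < c ∧ 0 < C ∧
    ∀ n : ℕ, 0 < n → ∀ x : ℝ, -(n : ℝ) ≤ x →
      (x + 2 * n) ^ (x + 2 * n) /
          ((2 * x + 2 * n) ^ (x + n) * (2 * n : ℝ) ^ (n : ℝ))
        ≤ C * Real.exp (-c * n * min (|x| / n) (x ^ 2 / n ^ 2)) := by
  refine ⟨1/20, 1, by norm_num, by norm_num, ?_⟩
  intro n hn x hx
  have hn0 : (0:ℝ) < n := by exact_mod_cast hn
  set p : ℝ := (x + n)/n with hpdef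
  have hp0 : 0 ≤ p := div_nonneg (by linarith) hn0.le
  have hxp : x = n*p - n := by rw [hpdef]; field_simp; ring
  clear_value p
  have hb1 : (0:ℝ) < x + 2*n := by linarith
  have hb3 : (0:ℝ) < 2*(n:ℝ) := by linarith
  have e1 : (x + 2*(n:ℝ)) ^ (x + 2*(n:ℝ)) = Real.exp (Real.log (x+2*n) * (x+2*n)) :=
    Real.rpow_def_of_pos hb1 _
  have e3 : (2*(n:ℝ)) ^ ((n:ℝ)) = Real.exp (Real.log (2*n) * n) := Real.rpow_def_of_pos hb3 _
  have e2 : (2*x + 2*(n:ℝ)) ^ (x + (n:ℝ)) = Real.exp (Real.log (2*x+2*n) * (x+n)) := by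
    rcases hx.lt_or_eq with h | h
    · exact Real.rpow_def_of_pos (by linarith) _
    · rw [show 2*x+2*(n:ℝ) = 0 by rw [← h]; ring, show x+(n:ℝ) = 0 by rw [← h]; ring]
      simp
  rw [e1, e2, e3, ← Real.exp_add, ← Real.exp_sub, one_mul, Real.exp_le_exp]
  -- min translation
  have hp1x : p - 1 = x / n := by rw [hpdef]; field_simp; ring
  have hm1 : |x| / (n:ℝ) = |p - 1| := by
    rw [hp1x, abs_div, abs_of_pos hn0]
  have hm2 : x^2 / (n:ℝ)^2 = (p-1)^2 := by
    rw [hp1x, div_pow]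
  -- exponent identity
  have hexp : Real.log (x+2*n) * (x+2*n) - (Real.log (2*x+2*n) * (x+n) + Real.log (2*n) * n)
      = -(n:ℝ) * (p * Real.log p - (p+1) * Real.log ((p+1)/2)) := by
    have l3 : Real.log (2*(n:ℝ)) = Real.log 2 + Real.log n :=
      Real.log_mul two_ne_zero hn0.ne'
    rcases hp0.eq_or_lt with h0 | h0
    · have hxn : x = -(n:ℝ) := by rw [hxp, ← h0]; ring
      rw [← h0]
      rw [show x + 2*(n:ℝ) = n by rw [hxn]; ring, show 2*x + 2*(n:ℝ) = 0 by rw [hxn]; ring,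
        show x + (n:ℝ) = 0 by rw [hxn]; ring, l3]
      have : Real.log ((0+1)/2) = -Real.log 2 := by
        rw [show ((0:ℝ)+1)/2 = 1/2 by norm_num, Real.log_div one_ne_zero two_ne_zero,
          Real.log_one]
        ring
      rw [this]
      simp [Real.log_zero]
      ring
    · have l1 : Real.log (x+2*(n:ℝ)) = Real.log n + Real.log (p+1) := by
        rw [show x+2*(n:ℝ) = n*(p+1) by rw [hxp]; ring,
          Real.log_mul hn0.ne' (by positivity)]
      have l2 : Real.log (2*x+2*(n:ℝ)) = Real.log 2 + Real.log n + Real.log p := by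
        rw [show 2*x+2*(n:ℝ) = 2*(n:ℝ)*p by rw [hxp]; ring,
          Real.log_mul (by positivity) h0.ne', l3]
      have l4 : Real.log ((p+1)/2) = Real.log (p+1) - Real.log 2 :=
        Real.log_div (by positivity) two_ne_zero
      rw [l1, l2, l4, l3, hxp]
      ring
  rw [hexp, hm1, hm2]
  have H := mul_le_mul_of_nonneg_left (hmain hp0) hn0.le
  nlinarith [H]
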